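/- Assume L_0 : R^m → R is differentiable with H-Lipschitz gradient, bounded below by L_0* > -∞. Let (θ_t) be generated by θ_{t+1} = θ_t - α d_t where 0 < α ≤ 1/H, 0 ≤ c < 1, and each d_t satisfies ‖d_t - ∇L_0(θ_t)‖ ≤ c‖∇L_0(θ_t)‖. Then for every T, Σ_{t=0}^T ‖∇L_0(θ_t)‖² ≤ 2(L_0(θ_0) - L_0*) / (α(1 - c²)). -/

import Mathlib

open scoped RealInnerProductSpace

lemma descent_lemma {m : ℕ} {H : ℝ} (hH : 0 ≤ H)
    {L₀ : EuclideanSpace ℝ (Fin m) → ℝ} {g : EuclideanSpace ℝ (Fin m) → EuclideanSpace ℝ (Fin m)}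
    (hgrad : ∀ x, HasGradientAt L₀ (g x) x)
    (hLip : ∀ x y, ‖g x - g y‖ ≤ H * ‖x - y‖)
    (x v : EuclideanSpace ℝ (Fin m)) :
    L₀ (x + v) ≤ L₀ x + ⟪g x, v⟫ + H / 2 * ‖v‖ ^ 2 := by
  set F : ℝ → ℝ := fun t => L₀ (x + t • v) - t * ⟪g x, v⟫ - H / 2 * t ^ 2 * ‖v‖ ^ 2 with hF
  have hderiv : ∀ t : ℝ, HasDerivAt F (⟪g (x + t • v), v⟫ - ⟪g x, v⟫ - H * t * ‖v‖ ^ 2) t := by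
    intro t
    have hc : HasDerivAt (fun t : ℝ => x + t • v) v t := by
      simpa using ((hasDerivAt_id t).smul_const v).const_add x
    have h1 : HasDerivAt (fun t : ℝ => L₀ (x + t • v)) ⟪g (x + t • v), v⟫ t := by
      have := (hgrad (x + t • v)).hasFDerivAt.comp_hasDerivAt t hc
      simpa [InnerProductSpace.toDual_apply_apply, Function.comp_def] using this
    have h2 : HasDerivAt (fun t : ℝ => t * ⟪g x, v⟫) ⟪g x, v⟫ t := by
      simpa using (hasDerivAt_id t).mul_const (⟪g x, v⟫)
    have h3 : HasDerivAt (fun t : ℝ => H / 2 * t ^ 2 * ‖v‖ ^ 2) (H * t * ‖v‖ ^ 2) t := by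
      have := ((hasDerivAt_pow 2 t).const_mul (H / 2)).mul_const (‖v‖ ^ 2)
      refine this.congr_deriv ?_
      rw [show (2:ℕ) - 1 = 1 from rfl]
      push_cast
      ring
    exact (h1.sub h2).sub h3
  have hmono : F 1 ≤ F 0 := by
    have : AntitoneOn F (Set.Icc 0 1) := by
      apply antitoneOn_of_deriv_nonpos (convex_Icc 0 1)
      · exact fun t _ => ((hderiv t).continuousAt).continuousWithinAt
      · intro t ht
        rw [interior_Icc] at ht
        exact ((hderiv t).differentiableAt).differentiableWithinAt
      · intro t ht
        rw [interior_Icc] at ht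
        rw [(hderiv t).deriv]
        have h1 : ⟪g (x + t • v) - g x, v⟫ ≤ ‖g (x + t • v) - g x‖ * ‖v‖ :=
          real_inner_le_norm _ _
        have h2 : ‖g (x + t • v) - g x‖ ≤ H * (t * ‖v‖) := by
          have := hLip (x + t • v) x
          simpa [norm_smul, abs_of_pos ht.1] using this
        have h3 : ⟪g (x + t • v), v⟫ - ⟪g x, v⟫ = ⟪g (x + t • v) - g x, v⟫ := by
          rw [inner_sub_left]
        nlinarith [norm_nonneg v, mul_le_mul_of_nonneg_right h2 (norm_nonneg v)]
    exact this (by norm_num) (by norm_num) (by norm_num)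
  simp only [hF, one_smul, zero_smul, add_zero, one_mul, one_pow, zero_pow, mul_zero, zero_mul,
    sub_zero] at hmono
  linarith

theorem stmt_4 (m : ℕ) (H α c L₀star : ℝ) (hH : 0 < H) (hα : 0 < α) (hαH : α ≤ 1 / H)
    (hc0 : 0 ≤ c) (hc1 : c < 1)
    (L₀ : EuclideanSpace ℝ (Fin m) → ℝ)
    (g : EuclideanSpace ℝ (Fin m) → EuclideanSpace ℝ (Fin m))
    (hgrad : ∀ x, HasGradientAt L₀ (g x) x)
    (hLip : ∀ x y, ‖g x - g y‖ ≤ H * ‖x - y‖)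
    (hbdd : ∀ x, L₀star ≤ L₀ x)
    (θ d : ℕ → EuclideanSpace ℝ (Fin m))
    (hupd : ∀ t, θ (t + 1) = θ t - α • d t)
    (hd : ∀ t, ‖d t - g (θ t)‖ ≤ c * ‖g (θ t)‖) (T : ℕ) :
    ∑ t ∈ Finset.range (T + 1), ‖g (θ t)‖ ^ 2 ≤
      2 * (L₀ (θ 0) - L₀star) / (α * (1 - c ^ 2)) := by
  have hαH' : α * H ≤ 1 := by
    rw [le_div_iff₀ hH] at hαH; linarith
  have hstep : ∀ t, α * (1 - c ^ 2) / 2 * ‖g (θ t)‖ ^ 2 ≤ L₀ (θ t) - L₀ (θ (t + 1)) := by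
    intro t
    have hdesc := descent_lemma hH.le hgrad hLip (θ t) (-(α • d t))
    rw [← sub_eq_add_neg, ← hupd t] at hdesc
    have e1 : ⟪g (θ t), -(α • d t)⟫ = -(α * ⟪g (θ t), d t⟫) := by
      rw [inner_neg_right, real_inner_smul_right]
    have e2 : ‖-(α • d t)‖ ^ 2 = α ^ 2 * ‖d t‖ ^ 2 := by
      rw [norm_neg, norm_smul, mul_pow, Real.norm_eq_abs, sq_abs]
    rw [e1, e2] at hdesc
    have key : ‖d t - g (θ t)‖ ^ 2 = ‖d t‖ ^ 2 - 2 * ⟪g (θ t), d t⟫ + ‖g (θ t)‖ ^ 2 := by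
      rw [norm_sub_sq_real, real_inner_comm]
    have hd2 : ‖d t - g (θ t)‖ ^ 2 ≤ c ^ 2 * ‖g (θ t)‖ ^ 2 := by
      have := hd t
      nlinarith [norm_nonneg (d t - g (θ t)), norm_nonneg (g (θ t))]
    have hquad : (H / 2) * (α ^ 2 * ‖d t‖ ^ 2) ≤ (α / 2) * ‖d t‖ ^ 2 := by
      nlinarith [sq_nonneg ‖d t‖, norm_nonneg (d t)]
    nlinarith [sq_nonneg ‖g (θ t)‖]
  have hsum : α * (1 - c ^ 2) / 2 * ∑ t ∈ Finset.range (T + 1), ‖g (θ t)‖ ^ 2 ≤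
      L₀ (θ 0) - L₀star := by
    rw [Finset.mul_sum]
    calc ∑ t ∈ Finset.range (T + 1), α * (1 - c ^ 2) / 2 * ‖g (θ t)‖ ^ 2
        ≤ ∑ t ∈ Finset.range (T + 1), (L₀ (θ t) - L₀ (θ (t + 1))) :=
          Finset.sum_le_sum fun t _ => hstep t
      _ = L₀ (θ 0) - L₀ (θ (T + 1)) := Finset.sum_range_sub' (fun t => L₀ (θ t)) (T + 1)
      _ ≤ L₀ (θ 0) - L₀star := by linarith [hbdd (θ (T + 1))]
  have hpos : 0 < α * (1 - c ^ 2) := mul_pos hα (by nlinarith)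
  rw [le_div_iff₀ hpos]
  linarith
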